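/- Let N ≥ 1, let Ω ⊆ ℝ³ be open and T > 0, let Λ : (0,∞)^N → ℝ be twice continuously differentiable, positive, and positively homogeneous of degree one, let G : (0,∞) → ℝ be continuously differentiable, let κ > 0, and let ρ : Ω × (0,T) → (0,∞)^N be twice differentiable. Suppose each component satisfies ∂_t ρ_i + div(ρ_i v) = 0 pointwise on Ω × (0,T), where the velocity is given by Darcy's law v = −κ ∇(G(Λ(ρ))), with ∇ the spatial gradient. Then the volume extension w := Λ ∘ ρ satisfies the porous-medium-type equation ∂_t w − div(κ w G'(w) ∇w) = 0 pointwise on Ω × (0,T). -/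

import Mathlib

/-- Partial derivative in time of a function of `(x,t) ∈ ℝ³ × ℝ`. -/
noncomputable def ptime (f : ((Fin 3 → ℝ) × ℝ) → ℝ) (z : (Fin 3 → ℝ) × ℝ) : ℝ :=
  fderiv ℝ f z (0, 1)

/-- `k`-th spatial partial derivative of a function of `(x,t) ∈ ℝ³ × ℝ`. -/
noncomputable def pspace (k : Fin 3) (f : ((Fin 3 → ℝ) × ℝ) → ℝ) (z : (Fin 3 → ℝ) × ℝ) : ℝ :=
  fderiv ℝ f z (Pi.single k 1, 0)

/-- Spatial divergence of a vector field of `(x,t) ∈ ℝ³ × ℝ`. -/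
noncomputable def spaceDiv (F : ((Fin 3 → ℝ) × ℝ) → Fin 3 → ℝ) (z : (Fin 3 → ℝ) × ℝ) : ℝ :=
  ∑ k, pspace k (fun p => F p k) z

/-- If each `ρ_i` satisfies `∂_t ρ_i + div(ρ_i v) = 0` with the Darcy velocity
`v = −κ ∇(G(Λ(ρ)))`, where `Λ` is positive, C², positively 1-homogeneous and `G` is C¹,
then `w = Λ ∘ ρ` satisfies the porous-medium-type equation
`∂_t w − div(κ w G'(w) ∇w) = 0` on `Ω × (0,T)`. -/
theorem porous_medium_equation_for_volume_extension
    (N : ℕ) (hN : 1 ≤ N)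
    (Ω : Set (Fin 3 → ℝ)) (hΩ : IsOpen Ω) (T : ℝ) (hT : 0 < T)
    (S : Set (Fin N → ℝ)) (hS : S = {y | ∀ i, 0 < y i})
    (Λ : (Fin N → ℝ) → ℝ)
    (hΛ : ContDiffOn ℝ 2 Λ S)
    (hΛpos : ∀ y ∈ S, 0 < Λ y)
    (hhom : ∀ t : ℝ, 0 < t → ∀ y ∈ S, Λ (t • y) = t * Λ y)
    (G : ℝ → ℝ) (hG : ContDiffOn ℝ 1 G (Set.Ioi 0))
    (κ : ℝ) (hκ : 0 < κ)
    (ρ : ((Fin 3 → ℝ) × ℝ) → Fin N → ℝ)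
    (hρdiff : ∀ z : (Fin 3 → ℝ) × ℝ, z.1 ∈ Ω → z.2 ∈ Set.Ioo 0 T → DifferentiableAt ℝ ρ z)
    (hρdiff2 : ∀ z : (Fin 3 → ℝ) × ℝ, z.1 ∈ Ω → z.2 ∈ Set.Ioo 0 T →
      DifferentiableAt ℝ (fderiv ℝ ρ) z)
    (hρS : ∀ z : (Fin 3 → ℝ) × ℝ, z.1 ∈ Ω → z.2 ∈ Set.Ioo 0 T → ρ z ∈ S)
    (v : ((Fin 3 → ℝ) × ℝ) → Fin 3 → ℝ)
    (hv : ∀ (z : (Fin 3 → ℝ) × ℝ) (k : Fin 3),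
      v z k = -κ * pspace k (fun p => G (Λ (ρ p))) z)
    (hpde : ∀ (i : Fin N) (z : (Fin 3 → ℝ) × ℝ), z.1 ∈ Ω → z.2 ∈ Set.Ioo 0 T →
      ptime (fun p => ρ p i) z + spaceDiv (fun p k => ρ p i * v p k) z = 0) :
    ∀ z : (Fin 3 → ℝ) × ℝ, z.1 ∈ Ω → z.2 ∈ Set.Ioo 0 T →
      ptime (fun p => Λ (ρ p)) z -
        spaceDiv (fun p k =>
          κ * Λ (ρ p) * deriv G (Λ (ρ p)) * pspace k (fun q => Λ (ρ q)) p) z = 0 := by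
  intro z hz1 hz2
  -- the open set `U = Ω × (0,T)`
  have hSopen : IsOpen S := by
    rw [hS]
    have h : {y : Fin N → ℝ | ∀ i, 0 < y i}
        = ⋂ i, (fun y : Fin N → ℝ => y i) ⁻¹' Set.Ioi 0 := by
      ext y; simp [Set.mem_iInter, Set.mem_preimage]
    rw [h]
    exact isOpen_iInter_of_finite fun i => isOpen_Ioi.preimage (continuous_apply i)
  have hUopen : IsOpen (Ω ×ˢ Set.Ioo 0 T) := hΩ.prod isOpen_Ioo
  have hzU : z ∈ Ω ×ˢ Set.Ioo 0 T := ⟨hz1, hz2⟩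
  have hnhds : Ω ×ˢ Set.Ioo 0 T ∈ nhds z := hUopen.mem_nhds hzU
  have hρU : ∀ p ∈ Ω ×ˢ Set.Ioo 0 T, ρ p ∈ S := fun p hp => hρS p hp.1 hp.2
  have hΛdS : ∀ y ∈ S, DifferentiableAt ℝ Λ y := fun y hy =>
    (hΛ.contDiffAt (hSopen.mem_nhds hy)).differentiableAt (by norm_num)
  have hρd : ∀ p ∈ Ω ×ˢ Set.Ioo 0 T, DifferentiableAt ℝ ρ p := fun p hp => hρdiff p hp.1 hp.2
  have hwd : ∀ p ∈ Ω ×ˢ Set.Ioo 0 T, HasFDerivAt (fun q => Λ (ρ q))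
      ((fderiv ℝ Λ (ρ p)).comp (fderiv ℝ ρ p)) p := fun p hp =>
    (hΛdS _ (hρU p hp)).hasFDerivAt.comp p (hρd p hp).hasFDerivAt
  have hwpos : ∀ p ∈ Ω ×ˢ Set.Ioo 0 T, 0 < Λ (ρ p) := fun p hp => hΛpos _ (hρU p hp)
  -- Euler's identity for the 1-homogeneous function Λ
  have heuler : ∀ y ∈ S, (fderiv ℝ Λ y) y = Λ y := by
    intro y hy
    have hsmul : HasDerivAt (fun t : ℝ => t • y) y 1 := by
      simpa using (hasDerivAt_id (1 : ℝ)).smul_const y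
    have h1 : HasDerivAt (fun t : ℝ => Λ (t • y)) ((fderiv ℝ Λ y) y) 1 := by
      have hΛy : HasFDerivAt Λ (fderiv ℝ Λ y) ((fun t : ℝ => t • y) 1) := by
        simpa using (hΛdS y hy).hasFDerivAt
      exact hΛy.comp_hasDerivAt 1 hsmul
    have heq : (fun t : ℝ => Λ (t • y)) =ᶠ[nhds 1] fun t : ℝ => t * Λ y := by
      filter_upwards [isOpen_Ioi.mem_nhds (by norm_num : (1:ℝ) ∈ Set.Ioi 0)] with t ht
      exact hhom t ht y hy
    have h2 : HasDerivAt (fun t : ℝ => Λ (t • y)) (Λ y) 1 := by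
      have : HasDerivAt (fun t : ℝ => t * Λ y) (Λ y) 1 := by
        simpa using (hasDerivAt_id (1 : ℝ)).mul_const (Λ y)
      exact this.congr_of_eventuallyEq heq
    exact h1.unique h2
  set L := fderiv ℝ Λ (ρ z) with hLdef
  have hρzi : ∀ i, 0 < ρ z i := by
    have := hρU z hzU; rw [hS] at this; exact this
  have hproj : ∀ i : Fin N, HasFDerivAt (fun p => ρ p i)
      (((ContinuousLinearMap.proj i : (Fin N → ℝ) →L[ℝ] ℝ)).comp (fderiv ℝ ρ z)) z := fun i =>
    (ContinuousLinearMap.proj i : (Fin N → ℝ) →L[ℝ] ℝ).hasFDerivAt.comp z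
      (hρd z hzU).hasFDerivAt
  -- key pointwise identity for each spatial direction
  have key : ∀ k : Fin 3,
      L (fun i => fderiv ℝ (fun p => ρ p i * v p k) z (Pi.single k 1, 0))
        = fderiv ℝ (fun p => Λ (ρ p) * v p k) z (Pi.single k 1, 0) := by
    intro k
    by_cases hdv : DifferentiableAt ℝ (fun p => v p k) z
    · have hwz := hwd z hzU
      have hprodw := hwz.fun_mul hdv.hasFDerivAt
      rw [hprodw.fderiv]
      have hfi : ∀ i : Fin N, fderiv ℝ (fun p => ρ p i * v p k) z (Pi.single k 1, 0)
          = ρ z i * (fderiv ℝ (fun p => v p k) z (Pi.single k 1, 0))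
            + v z k * (fderiv ℝ ρ z (Pi.single k 1, 0) i) := by
        intro i
        rw [((hproj i).fun_mul hdv.hasFDerivAt).fderiv]
        simp [mul_comm]
      have hvec : (fun i => fderiv ℝ (fun p => ρ p i * v p k) z (Pi.single k 1, 0))
          = (fderiv ℝ (fun p => v p k) z (Pi.single k 1, 0)) • (ρ z)
            + (v z k) • (fderiv ℝ ρ z (Pi.single k 1, 0)) := by
        funext i; rw [hfi i]; simp [mul_comm]
      rw [hvec, map_add, map_smul, map_smul]
      rw [heuler _ (hρU z hzU)]
      simp [smul_eq_mul]
      ring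
    · have habs : ∀ g : ((Fin 3 → ℝ) × ℝ) → ℝ, DifferentiableAt ℝ g z → g z ≠ 0 →
          ¬ DifferentiableAt ℝ (fun p => g p * v p k) z := by
        intro g hg hgz hmul
        apply hdv
        have hne : ∀ᶠ p in nhds z, g p ≠ 0 := hg.continuousAt.eventually_ne hgz
        have heq : (fun p => (g p * v p k) * (g p)⁻¹) =ᶠ[nhds z] fun p => v p k := by
          filter_upwards [hne] with p hp
          field_simp
        have hdivd : DifferentiableAt ℝ (fun p => (g p * v p k) * (g p)⁻¹) z :=
          hmul.mul (hg.inv hgz)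
        exact hdivd.congr_of_eventuallyEq heq.symm
      have h1 : ∀ i : Fin N, fderiv ℝ (fun p => ρ p i * v p k) z = 0 := fun i =>
        fderiv_zero_of_not_differentiableAt
          (habs _ (hproj i).differentiableAt (ne_of_gt (hρzi i)))
      have h2 : fderiv ℝ (fun p => Λ (ρ p) * v p k) z = 0 :=
        fderiv_zero_of_not_differentiableAt
          (habs _ (hwd z hzU).differentiableAt (ne_of_gt (hwpos z hzU)))
      rw [h2]
      have : (fun i : Fin N => fderiv ℝ (fun p => ρ p i * v p k) z (Pi.single k 1, 0))
          = (0 : Fin N → ℝ) := by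
        funext i; rw [h1 i]; rfl
      rw [this, map_zero]
      rfl
  -- the velocity in terms of w
  have hvform : ∀ p ∈ Ω ×ˢ Set.Ioo 0 T, ∀ k : Fin 3, Λ (ρ p) * v p k
      = -(κ * Λ (ρ p) * deriv G (Λ (ρ p)) * pspace k (fun q => Λ (ρ q)) p) := by
    intro p hp k
    have hGd : HasDerivAt G (deriv G (Λ (ρ p))) (Λ (ρ p)) :=
      (((hG.contDiffAt (isOpen_Ioi.mem_nhds (hwpos p hp))).differentiableAt
        (by norm_num)).hasDerivAt)
    have hw := hwd p hp
    have hGw : HasFDerivAt (fun q => G (Λ (ρ q)))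
        (deriv G (Λ (ρ p)) • ((fderiv ℝ Λ (ρ p)).comp (fderiv ℝ ρ p))) p :=
      hGd.comp_hasFDerivAt p hw
    have h1 : pspace k (fun q => G (Λ (ρ q))) p
        = deriv G (Λ (ρ p)) * pspace k (fun q => Λ (ρ q)) p := by
      rw [pspace, hGw.fderiv, pspace, hw.fderiv]
      simp
    rw [hv p k, h1]
    ring
  -- fderiv of the flux equals fderiv of -(w v_k)
  have hflux : ∀ k : Fin 3,
      pspace k (fun p => κ * Λ (ρ p) * deriv G (Λ (ρ p)) * pspace k (fun q => Λ (ρ q)) p) z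
        = - fderiv ℝ (fun p => Λ (ρ p) * v p k) z (Pi.single k 1, 0) := by
    intro k
    have heq : (fun p => κ * Λ (ρ p) * deriv G (Λ (ρ p)) * pspace k (fun q => Λ (ρ q)) p)
        =ᶠ[nhds z] fun p => -(Λ (ρ p) * v p k) := by
      filter_upwards [hnhds] with p hp
      rw [hvform p hp k, neg_neg]
    rw [pspace, heq.fderiv_eq, fderiv_fun_neg]
    simp
  -- time derivative via chain rule and the PDE
  have htproj : ∀ i : Fin N, ptime (fun p => ρ p i) z = fderiv ℝ ρ z (0, 1) i := by
    intro i; rw [ptime, (hproj i).fderiv]; rfl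
  have hpde' : ∀ i : Fin N, fderiv ℝ ρ z (0, 1) i
      = -∑ k : Fin 3, fderiv ℝ (fun p => ρ p i * v p k) z (Pi.single k 1, 0) := by
    intro i
    have := hpde i z hz1 hz2
    rw [htproj i] at this
    simp only [spaceDiv, pspace] at this
    linarith [this]
  have htime : ptime (fun p => Λ (ρ p)) z
      = -∑ k : Fin 3, L (fun i => fderiv ℝ (fun p => ρ p i * v p k) z (Pi.single k 1, 0)) := by
    rw [ptime, (hwd z hzU).fderiv]
    have h0 : (fderiv ℝ Λ (ρ z)).comp (fderiv ℝ ρ z) (0, 1) = L (fderiv ℝ ρ z (0, 1)) := rfl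
    rw [h0]
    have hvec : fderiv ℝ ρ z (0, 1)
        = -∑ k : Fin 3, (fun i => fderiv ℝ (fun p => ρ p i * v p k) z (Pi.single k 1, 0)) := by
      funext i
      rw [hpde' i]
      simp [Finset.sum_apply]
    rw [hvec, map_neg, map_sum]
  -- conclude
  simp only [spaceDiv]
  rw [htime]
  have : ∑ k : Fin 3, pspace k
      (fun p => κ * Λ (ρ p) * deriv G (Λ (ρ p)) * pspace k (fun q => Λ (ρ q)) p) z
      = ∑ k : Fin 3, -(L (fun i => fderiv ℝ (fun p => ρ p i * v p k) z (Pi.single k 1, 0))) := by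
    refine Finset.sum_congr rfl fun k _ => ?_
    rw [hflux k, key k]
  rw [this]
  simp
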